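/- Let D = {(z₁,z₂) ∈ ℂ² : |z₂| < 1/(1+|z₁|)}. Then every function f : ℂ² → ℂ that is holomorphic on D and satisfies ∫_D |f|² dV < ∞ vanishes at the origin: f(0,0) = 0. -/

import Mathlib

open MeasureTheory

section Aux
open Set Real Metric

theorem real_lintegral_comp_polarCoord_symm (g : ℝ × ℝ → ENNReal) :
    (∫⁻ p in polarCoord.target, ENNReal.ofReal p.1 * g (polarCoord.symm p)) = ∫⁻ p, g p := by
  set B : ℝ × ℝ → ℝ × ℝ →L[ℝ] ℝ × ℝ := fun p =>
    LinearMap.toContinuousLinearMap (Matrix.toLin (Module.Basis.finTwoProd ℝ) (Module.Basis.finTwoProd ℝ)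
      !![Real.cos p.2, -p.1 * Real.sin p.2; Real.sin p.2, p.1 * Real.cos p.2])
  have A : ∀ p ∈ polarCoord.target, HasFDerivWithinAt polarCoord.symm (B p) polarCoord.target p :=
    fun p _ => (hasFDerivAt_polarCoord_symm p).hasFDerivWithinAt
  have B_det : ∀ p, (B p).det = p.1 := by
    intro p
    conv_rhs => rw [← one_mul p.1, ← cos_sq_add_sin_sq p.2]
    simp only [B, neg_mul, LinearMap.det_toContinuousLinearMap, LinearMap.det_toLin,
      Matrix.det_fin_two_of, sub_neg_eq_add]
    ring
  symm
  calc
    ∫⁻ p, g p = ∫⁻ p in polarCoord.source, g p := by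
      rw [← setLIntegral_univ]
      exact (setLIntegral_congr polarCoord_source_ae_eq_univ).symm
    _ = ∫⁻ p in polarCoord.target, ENNReal.ofReal |(B p).det| * g (polarCoord.symm p) := by
      rw [← OpenPartialHomeomorph.symm_image_target_eq_source,
        lintegral_image_eq_lintegral_abs_det_fderiv_mul volume
          polarCoord.open_target.measurableSet A polarCoord.symm.injOn g]
    _ = ∫⁻ p in polarCoord.target, ENNReal.ofReal p.1 * g (polarCoord.symm p) := by
      refine setLIntegral_congr_fun polarCoord.open_target.measurableSet
        (fun x hx => ?_)
      rw [B_det, abs_of_pos hx.1]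

theorem Complex.lintegral_comp_polarCoord_symm' (g : ℂ → ENNReal) :
    (∫⁻ p in polarCoord.target, ENNReal.ofReal p.1 * g (Complex.polarCoord.symm p)) = ∫⁻ z, g z := by
  rw [← (Complex.volume_preserving_equiv_real_prod.symm).lintegral_comp_emb
    Complex.measurableEquivRealProd.symm.measurableEmbedding,
    ← real_lintegral_comp_polarCoord_symm (fun p => g (Complex.measurableEquivRealProd.symm p))]
  rfl


-- Cauchy MVP: integral over one full circle
theorem mvp_eq (h : ℂ → ℂ) {ρ r : ℝ} (hr : 0 < r) (hrρ : r < ρ)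
    (hd : DifferentiableOn ℂ h (ball (0:ℂ) ρ)) :
    (∫ θ in (0:ℝ)..(2*π), h (circleMap 0 r θ)) = (2*π : ℝ) • h 0 := by
  have hsub : closedBall (0:ℂ) r ⊆ ball 0 ρ := closedBall_subset_ball hrρ
  have hc : ContinuousOn h (closedBall (0:ℂ) r) := hd.continuousOn.mono hsub
  have hd' : ∀ z ∈ ball (0:ℂ) r \ (∅ : Set ℂ), DifferentiableAt ℂ h z := fun z hz =>
    hd.differentiableAt (isOpen_ball.mem_nhds (hsub (ball_subset_closedBall hz.1)))
  have key := Complex.circleIntegral_sub_center_inv_smul_of_differentiable_on_off_countable hr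
    countable_empty hc hd'
  rw [circleIntegral] at key
  have : ∀ θ : ℝ, deriv (circleMap 0 r) θ • (circleMap 0 r θ - 0)⁻¹ • h (circleMap 0 r θ)
      = Complex.I • h (circleMap 0 r θ) := by
    intro θ
    have hne : circleMap 0 r θ ≠ 0 := circleMap_ne_center hr.ne'
    rw [deriv_circleMap]
    simp only [smul_eq_mul, sub_zero]
    field_simp
  simp only [this] at key
  rw [intervalIntegral.integral_smul] at key
  have h2 : (2 * ↑π * Complex.I : ℂ) • h 0 = Complex.I • ((2*π:ℝ) • h 0) := by
    simp only [smul_eq_mul, Complex.real_smul]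
    push_cast
    ring
  rw [h2] at key
  exact smul_right_injective ℂ Complex.I_ne_zero key

-- L² mean value inequality on the circle, over (-π, π]
theorem mvp_sq (h : ℂ → ℂ) {ρ r : ℝ} (hr : 0 < r) (hrρ : r < ρ)
    (hd : DifferentiableOn ℂ h (ball (0:ℂ) ρ)) :
    ENNReal.ofReal (2*π) * (‖h 0‖₊ : ENNReal)^2
      ≤ ∫⁻ θ in Ioo (-π) π, (‖h (circleMap 0 r θ)‖₊ : ENNReal)^2 := by
  have hcont : Continuous fun θ : ℝ => h (circleMap 0 r θ) := by
    apply hd.continuousOn.comp_continuous (continuous_circleMap 0 r)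
    intro θ
    rw [mem_ball_zero_iff]
    simpa [abs_of_pos hr] using hrρ
  -- step 1: first moment bound
  have step1 : ENNReal.ofReal (2*π) * (‖h 0‖₊ : ENNReal)
      ≤ ∫⁻ θ in Ioc 0 (2*π), (‖h (circleMap 0 r θ)‖₊ : ENNReal) := by
    have e1 : (∫ θ in (0:ℝ)..(2*π), h (circleMap 0 r θ)) = (2*π : ℝ) • h 0 :=
      mvp_eq h hr hrρ hd
    have e2 : (∫ θ in (0:ℝ)..(2*π), h (circleMap 0 r θ))
        = ∫ θ in Ioc 0 (2*π), h (circleMap 0 r θ) :=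
      intervalIntegral.integral_of_le (by positivity)
    calc ENNReal.ofReal (2*π) * (‖h 0‖₊ : ENNReal)
        = (‖(2*π:ℝ) • h 0‖₊ : ENNReal) := by
          rw [nnnorm_smul, ENNReal.coe_mul, ← Real.enorm_eq_ofReal Real.two_pi_pos.le]; rfl
      _ = (‖∫ θ in Ioc 0 (2*π), h (circleMap 0 r θ)‖₊ : ENNReal) := by rw [← e2, e1]
      _ ≤ _ := enorm_integral_le_lintegral_enorm _
  -- step 2: Cauchy–Schwarz
  have meas : Measurable fun θ : ℝ => (‖h (circleMap 0 r θ)‖₊ : ENNReal) :=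
    hcont.nnnorm.measurable.coe_nnreal_ennreal
  have step2 : (ENNReal.ofReal (2*π)) * (‖h 0‖₊ : ENNReal)^2
      ≤ ∫⁻ θ in Ioc 0 (2*π), (‖h (circleMap 0 r θ)‖₊ : ENNReal)^2 := by
    set A := ∫⁻ θ in Ioc 0 (2*π), (‖h (circleMap 0 r θ)‖₊ : ENNReal)
    set B := ∫⁻ θ in Ioc 0 (2*π), (‖h (circleMap 0 r θ)‖₊ : ENNReal)^2
    have hCS : A ≤ B ^ (1/2 : ℝ) * (ENNReal.ofReal (2*π)) ^ (1/2 : ℝ) := by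
      have := ENNReal.lintegral_mul_le_Lp_mul_Lq (volume.restrict (Ioc 0 (2*π)))
        (Real.HolderConjugate.conjExponent one_lt_two)
        meas.aemeasurable aemeasurable_const (g := fun _ => (1:ENNReal))
      simp only [Pi.mul_apply, mul_one, ENNReal.one_rpow, lintegral_const,
        Measure.restrict_apply MeasurableSet.univ, univ_inter] at this
      calc A ≤ (∫⁻ θ in Ioc 0 (2*π), (‖h (circleMap 0 r θ)‖₊ : ENNReal) ^ (2:ℝ)) ^ (1/2:ℝ)
            * (volume (Ioc (0:ℝ) (2*π))) ^ (1/(2:ℝ)) := by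
            convert this using 3 <;> norm_num [Real.conjExponent]
        _ = B ^ (1/2:ℝ) * (ENNReal.ofReal (2*π)) ^ (1/2:ℝ) := by
            rw [Real.volume_Ioc]
            congr 2
            · refine lintegral_congr fun θ => ?_
              rw [← ENNReal.rpow_natCast]
              norm_num
            · norm_num
    have hsq : (ENNReal.ofReal (2*π) * (‖h 0‖₊ : ENNReal))^2 ≤ B * ENNReal.ofReal (2*π) := by
      calc (ENNReal.ofReal (2*π) * (‖h 0‖₊ : ENNReal))^2 ≤ A^2 := by
            exact pow_le_pow_left' step1 2
        _ ≤ (B ^ (1/2 : ℝ) * (ENNReal.ofReal (2*π)) ^ (1/2 : ℝ))^2 := pow_le_pow_left' hCS 2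
        _ = B * ENNReal.ofReal (2*π) := by
            rw [mul_pow, ← ENNReal.rpow_natCast (B ^ (1/2:ℝ)), ← ENNReal.rpow_natCast
              ((ENNReal.ofReal (2*π)) ^ (1/2:ℝ)), ← ENNReal.rpow_mul, ← ENNReal.rpow_mul]
            norm_num
    have h2π : ENNReal.ofReal (2*π) ≠ 0 :=
      ne_of_gt (ENNReal.ofReal_pos.mpr Real.two_pi_pos)
    have h2π' : ENNReal.ofReal (2*π) ≠ ⊤ := ENNReal.ofReal_ne_top
    rw [mul_pow] at hsq
    refine (ENNReal.mul_le_mul_iff_left h2π h2π').mp ?_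
    calc ENNReal.ofReal (2*π) * (‖h 0‖₊ : ENNReal)^2 * ENNReal.ofReal (2*π)
        = ENNReal.ofReal (2*π)^2 * (‖h 0‖₊ : ENNReal)^2 := by ring
      _ ≤ B * ENNReal.ofReal (2*π) := hsq
  -- step 3: periodicity shift
  haveI : Fact (0 < 2*π) := ⟨Real.two_pi_pos⟩
  have hper : Function.Periodic (fun θ : ℝ => (‖h (circleMap 0 r θ)‖₊ : ENNReal)^2) (2*π) :=
    fun θ => by simp [periodic_circleMap 0 r θ]
  have eshift : (∫⁻ θ in Ioc 0 (2*π), (‖h (circleMap 0 r θ)‖₊ : ENNReal)^2)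
      = ∫⁻ θ in Ioc (-π) π, (‖h (circleMap 0 r θ)‖₊ : ENNReal)^2 := by
    have e1 := AddCircle.lintegral_preimage (2*π) 0 hper.lift
    have e2 := AddCircle.lintegral_preimage (2*π) (-π) hper.lift
    simp only [Function.Periodic.lift_coe, zero_add] at e1 e2
    have hpi : -π + 2*π = π := by ring
    rw [hpi] at e2
    rw [e1, ← e2]
  rw [setLIntegral_congr Ioo_ae_eq_Ioc, ← eshift]
  exact step2

theorem disc_bound (h : ℂ → ℂ) {ρ : ℝ} (hρ : 0 < ρ)
    (hd : DifferentiableOn ℂ h (ball (0:ℂ) ρ)) (w : ℝ → ENNReal) (hw : Measurable w) :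
    (∫⁻ s in Ioo 0 ρ, ENNReal.ofReal s * w s) * (ENNReal.ofReal (2*π) * (‖h 0‖₊ : ENNReal)^2)
      ≤ ∫⁻ z in ball (0:ℂ) ρ, w (‖z‖) * (‖h z‖₊ : ENNReal)^2 := by
  classical
  -- measurable globalization of ‖h‖² on the ball
  set N : ℂ → ENNReal := (ball (0:ℂ) ρ).piecewise (fun z => (‖h z‖₊ : ENNReal)^2) 0 with hN
  have hNmeas : Measurable N := by
    refine ContinuousOn.measurable_piecewise ?_ continuousOn_const isOpen_ball.measurableSet
    exact (ENNReal.continuous_pow 2).comp_continuousOn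
      (ENNReal.continuous_coe.comp_continuousOn hd.continuousOn.nnnorm)
  set g : ℂ → ENNReal := fun z => w (‖z‖) * N z with hg
  have hgmeas : Measurable g := (hw.comp continuous_norm.measurable).mul hNmeas
  have hsupp : ∀ z, z ∉ ball (0:ℂ) ρ → g z = 0 := by
    intro z hz
    simp only [hg, hN]
    rw [Set.piecewise_eq_of_notMem _ _ _ hz]
    simp
  -- symm formula as circleMap
  have hsymm : ∀ s θ : ℝ, Complex.polarCoord.symm (s, θ) = circleMap 0 s θ := by
    intro s θ
    simp [circleMap, Complex.exp_mul_I]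
  have habs : ∀ s θ : ℝ, 0 < s → ‖(Complex.polarCoord.symm (s, θ))‖ = s := by
    intro s θ hs
    rw [Complex.norm_polarCoord_symm, abs_of_pos (show 0 < (s, θ).1 from hs)]
  calc
    (∫⁻ s in Ioo 0 ρ, ENNReal.ofReal s * w s) * (ENNReal.ofReal (2*π) * (‖h 0‖₊ : ENNReal)^2)
        = ∫⁻ s in Ioo 0 ρ, (ENNReal.ofReal s * w s) * (ENNReal.ofReal (2*π) * (‖h 0‖₊ : ENNReal)^2) := by
          rw [lintegral_mul_const' _ _ (ENNReal.mul_ne_top ENNReal.ofReal_ne_top (ENNReal.pow_ne_top ENNReal.coe_ne_top))]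
    _ ≤ ∫⁻ s in Ioo 0 ρ, ∫⁻ θ in Ioo (-π) π, ENNReal.ofReal s * g (Complex.polarCoord.symm (s, θ)) := by
          refine setLIntegral_mono' measurableSet_Ioo fun s hs => ?_
          have hcongr : ∀ θ : ℝ, g (Complex.polarCoord.symm (s, θ))
              = w s * (‖h (circleMap 0 s θ)‖₊ : ENNReal)^2 := by
            intro θ
            have hmem : Complex.polarCoord.symm (s, θ) ∈ ball (0:ℂ) ρ := by
              rw [mem_ball_zero_iff, habs s θ hs.1]
              exact hs.2
            rw [hg]
            simp only
            rw [habs s θ hs.1, hN, Set.piecewise_eq_of_mem _ _ _ hmem, hsymm]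
          calc ENNReal.ofReal s * w s * (ENNReal.ofReal (2*π) * (‖h 0‖₊ : ENNReal)^2)
              ≤ ENNReal.ofReal s * w s * ∫⁻ θ in Ioo (-π) π, (‖h (circleMap 0 s θ)‖₊ : ENNReal)^2 := by
                gcongr
                exact mvp_sq h hs.1 hs.2 hd
            _ = ∫⁻ θ in Ioo (-π) π, ENNReal.ofReal s * g (Complex.polarCoord.symm (s, θ)) := by
                have hcont : Continuous fun θ : ℝ => h (circleMap 0 s θ) :=
                  hd.continuousOn.comp_continuous (continuous_circleMap 0 s)
                    (fun θ => by
                      rw [mem_ball_zero_iff]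
                      simpa [abs_of_pos hs.1] using hs.2)
                have hXmeas : Measurable fun θ : ℝ => (‖h (circleMap 0 s θ)‖₊ : ENNReal)^2 :=
                  (hcont.nnnorm.measurable.coe_nnreal_ennreal).pow_const 2
                simp_rw [hcongr, ← mul_assoc]
                exact (lintegral_const_mul _ hXmeas).symm
    _ ≤ ∫⁻ s in Ioi 0, ∫⁻ θ in Ioo (-π) π, ENNReal.ofReal s * g (Complex.polarCoord.symm (s, θ)) := by
          exact lintegral_mono' (Measure.restrict_mono Ioo_subset_Ioi_self le_rfl) le_rfl
    _ = ∫⁻ p in polarCoord.target, ENNReal.ofReal p.1 * g (Complex.polarCoord.symm p) := by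
          have hsymm_cont : Continuous (⇑Complex.polarCoord.symm) := by
            have he : (⇑Complex.polarCoord.symm)
                = fun p : ℝ × ℝ => (p.1 : ℂ) * (Real.cos p.2 + Real.sin p.2 * Complex.I) :=
              funext fun p => Complex.polarCoord_symm_apply p
            rw [he]
            fun_prop
          have hF : Measurable fun p : ℝ × ℝ =>
              ENNReal.ofReal p.1 * g (Complex.polarCoord.symm p) :=
            (measurable_fst.ennreal_ofReal).mul (hgmeas.comp hsymm_cont.measurable)
          rw [show (polarCoord.target : Set (ℝ × ℝ)) = Ioi 0 ×ˢ Ioo (-π) π from rfl, Measure.volume_eq_prod, ← Measure.prod_restrict,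
            lintegral_prod _ hF.aemeasurable]
    _ = ∫⁻ z, g z := Complex.lintegral_comp_polarCoord_symm' g
    _ = ∫⁻ z in ball (0:ℂ) ρ, g z := by
          rw [← lintegral_indicator measurableSet_ball,
            Set.indicator_eq_self.mpr (Function.support_subset_iff'.mpr hsupp)]
    _ = ∫⁻ z in ball (0:ℂ) ρ, w (‖z‖) * (‖h z‖₊ : ENNReal)^2 := by
          refine setLIntegral_congr_fun measurableSet_ball
            (fun z hz => ?_)
          simp only [hg, hN]
          rw [Set.piecewise_eq_of_mem _ _ _ hz]

theorem lint_id {ρ : ℝ} (hρ : 0 < ρ) :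
    ∫⁻ s in Ioo 0 ρ, ENNReal.ofReal s = ENNReal.ofReal (ρ^2/2) := by
  rw [← ofReal_integral_eq_lintegral_ofReal]
  · congr 1
    rw [setIntegral_congr_set Ioo_ae_eq_Ioc, ← intervalIntegral.integral_of_le hρ.le,
      integral_id]
    norm_num
  · exact (intervalIntegrable_iff_integrableOn_Ioc_of_le hρ.le).mp
      (continuous_id.intervalIntegrable 0 ρ) |>.mono_set Ioo_subset_Ioc_self
  · exact (ae_restrict_iff' measurableSet_Ioo).2 (ae_of_all _ fun x hx => hx.1.le)

theorem lint_log {R : ℝ} (hR : 1 < R) :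
    ∫⁻ s in Ioo 1 R, ENNReal.ofReal (π/4 * (1/s)) = ENNReal.ofReal (π/4 * Real.log R) := by
  rw [← ofReal_integral_eq_lintegral_ofReal]
  · congr 1
    rw [setIntegral_congr_set Ioo_ae_eq_Ioc, ← intervalIntegral.integral_of_le hR.le,
      intervalIntegral.integral_const_mul, integral_one_div]
    · rw [div_one]
    · intro hmem
      rw [Set.uIcc_of_le hR.le] at hmem
      linarith [hmem.1]
  · have hc : ContinuousOn (fun s : ℝ => π/4 * (1/s)) (Icc 1 R) := by
      apply ContinuousOn.mul continuousOn_const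
      apply ContinuousOn.div continuousOn_const continuousOn_id
      intro x hx
      have := hx.1
      positivity
    exact (hc.integrableOn_Icc).mono_set Ioo_subset_Icc_self
  · refine (ae_restrict_iff' measurableSet_Ioo).2 (ae_of_all _ fun x hx => ?_)
    have h1 : (0:ℝ) < x := lt_trans one_pos hx.1
    positivity


end Aux

open Set Real Metric in
/-- On the domain `D = {(z₁,z₂) ∈ ℂ² : |z₂| < 1/(1+|z₁|)}`, every
square-integrable holomorphic function vanishes at the origin. -/
theorem sqInt_holomorphic_vanishes_at_origin
    (f : ℂ × ℂ → ℂ)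
    (hf : DifferentiableOn ℂ f {p : ℂ × ℂ | ‖p.2‖ < 1 / (1 + ‖p.1‖)})
    (hL2 : IntegrableOn (fun p => ‖(f p)‖ ^ 2)
      {p : ℂ × ℂ | ‖p.2‖ < 1 / (1 + ‖p.1‖)}) :
    f (0, 0) = 0 := by
  classical
  set D : Set (ℂ × ℂ) := {p : ℂ × ℂ | ‖p.2‖ < 1 / (1 + ‖p.1‖)} with hD
  have hpos : ∀ z : ℂ, 0 < 1 / (1 + ‖z‖) := fun z => by positivity
  have hDopen : IsOpen D := by
    apply isOpen_lt
    · exact continuous_norm.comp continuous_snd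
    · apply Continuous.div continuous_const
      · exact continuous_const.add (continuous_norm.comp continuous_fst)
      · intro p
        positivity
  set K : ENNReal := ∫⁻ p in D, (‖f p‖₊ : ENNReal)^2 with hK
  have hKfin : K ≠ ⊤ := by
    have h1 := hL2.2
    rw [HasFiniteIntegral] at h1
    have heq : ∀ p : ℂ × ℂ, (‖‖(f p)‖ ^ 2‖₊ : ENNReal) = (‖f p‖₊ : ENNReal)^2 := by
      intro p
      rw [nnnorm_pow, nnnorm_norm]
      push_cast
      ring
    simp only [enorm_eq_nnnorm] at h1
    simp_rw [heq] at h1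
    exact h1.ne
  -- the entire function z ↦ f (z, 0)
  set g : ℂ → ℂ := fun z => f (z, 0) with hgdef
  have hmem0 : ∀ z : ℂ, (z, (0:ℂ)) ∈ D := by
    intro z
    show ‖(0:ℂ)‖ < 1 / (1 + ‖z‖)
    simpa using hpos z
  have hgd : Differentiable ℂ g := by
    intro z
    exact (hf.differentiableAt (hDopen.mem_nhds (hmem0 z))).comp z
      (differentiableAt_id.prodMk (differentiableAt_const 0))
  -- weight
  set W : ℝ → ENNReal := fun t => ENNReal.ofReal ((1/(1+t))^2/2) * ENNReal.ofReal (2*π)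
    with hWdef
  have hWmeas : Measurable W := by
    apply Measurable.mul_const
    apply Measurable.ennreal_ofReal
    exact ((measurable_const.div (measurable_const.add measurable_id)).pow_const 2).div_const 2
  -- globalized integrand
  set FD : ℂ × ℂ → ENNReal := D.piecewise (fun p => (‖f p‖₊ : ENNReal)^2) 0 with hFDdef
  have hFDmeas : Measurable FD := by
    refine ContinuousOn.measurable_piecewise ?_ continuousOn_const hDopen.measurableSet
    exact (ENNReal.continuous_pow 2).comp_continuousOn
      (ENNReal.continuous_coe.comp_continuousOn hf.continuousOn.nnnorm)
  have hFD0 : ∀ p ∉ D, FD p = 0 := by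
    intro p hp
    simp only [hFDdef]
    rw [Set.piecewise_eq_of_notMem _ _ _ hp]
    rfl
  have hFD1 : ∀ p ∈ D, FD p = (‖f p‖₊ : ENNReal)^2 := by
    intro p hp
    simp only [hFDdef]
    rw [Set.piecewise_eq_of_mem _ _ _ hp]
  have hKFD : K = ∫⁻ p, FD p := by
    have h1 : ∫⁻ p, FD p = ∫⁻ p in D, FD p := by
      rw [← lintegral_indicator hDopen.measurableSet]
      congr 1
      exact (Set.indicator_eq_self.mpr (Function.support_subset_iff'.mpr hFD0)).symm
    have h2 : ∫⁻ p in D, FD p = ∫⁻ p in D, (‖f p‖₊ : ENNReal)^2 :=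
      setLIntegral_congr_fun hDopen.measurableSet
        (fun p hp => hFD1 p hp)
    rw [h1, h2]
  -- Step A : weighted L² bound for g
  have stepA : (∫⁻ z₁ : ℂ, W (‖z₁‖) * (‖g z₁‖₊ : ENNReal)^2) ≤ K := by
    rw [hKFD, Measure.volume_eq_prod, lintegral_prod _ hFDmeas.aemeasurable]
    refine lintegral_mono fun z₁ => ?_
    set ρ : ℝ := 1 / (1 + ‖z₁‖) with hρdef
    have hρpos : 0 < ρ := hpos z₁
    have hball : ∀ z₂ : ℂ, z₂ ∈ ball (0:ℂ) ρ ↔ (z₁, z₂) ∈ D := by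
      intro z₂
      rw [mem_ball_zero_iff]
      exact Iff.rfl
    have hslice : DifferentiableOn ℂ (fun z₂ => f (z₁, z₂)) (ball (0:ℂ) ρ) := by
      intro z hz
      exact ((hf.differentiableAt (hDopen.mem_nhds ((hball z).mp hz))).comp z
        ((differentiableAt_const z₁).prodMk differentiableAt_id)).differentiableWithinAt
    have hdb := disc_bound (fun z₂ => f (z₁, z₂)) hρpos hslice (fun _ => 1) measurable_const
    calc W (‖z₁‖) * (‖g z₁‖₊ : ENNReal)^2
        = (∫⁻ s in Ioo 0 ρ, ENNReal.ofReal s * 1) *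
            (ENNReal.ofReal (2*π) * (‖f (z₁, (0:ℂ))‖₊ : ENNReal)^2) := by
          simp_rw [mul_one]
          rw [lint_id hρpos, hWdef]
          simp only [hgdef]
          ring
      _ ≤ ∫⁻ z₂ in ball (0:ℂ) ρ, (fun _ : ℝ => (1:ENNReal)) (‖z₂‖) *
            (‖f (z₁, z₂)‖₊ : ENNReal)^2 := hdb
      _ = ∫⁻ z₂ in ball (0:ℂ) ρ, FD (z₁, z₂) := by
          refine setLIntegral_congr_fun measurableSet_ball
            (fun z₂ hz₂ => ?_)
          rw [one_mul, hFD1 _ ((hball z₂).mp hz₂)]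
      _ ≤ ∫⁻ z₂, FD (z₁, z₂) := setLIntegral_le_lintegral _ _
  -- Step B : divergence
  have stepB : ∀ R : ℝ, 1 < R →
      ENNReal.ofReal (π/4 * Real.log R) *
        (ENNReal.ofReal (2*π) * (‖f ((0:ℂ), (0:ℂ))‖₊ : ENNReal)^2) ≤ K := by
    intro R hR
    have hR0 : (0:ℝ) < R := lt_trans one_pos hR
    have hdb := disc_bound g hR0 (hgd.differentiableOn) W hWmeas
    have hg0 : g 0 = f ((0:ℂ), (0:ℂ)) := rfl
    rw [hg0] at hdb
    have hlow : ENNReal.ofReal (π/4 * Real.log R) ≤ ∫⁻ s in Ioo 0 R, ENNReal.ofReal s * W s := by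
      rw [← lint_log hR]
      calc (∫⁻ s in Ioo 1 R, ENNReal.ofReal (π/4 * (1/s)))
          ≤ ∫⁻ s in Ioo 1 R, ENNReal.ofReal s * W s := by
            refine setLIntegral_mono' measurableSet_Ioo fun s hs => ?_
            have hs1 : (1:ℝ) < s := hs.1
            have hs0 : (0:ℝ) < s := lt_trans one_pos hs1
            have h1s : (0:ℝ) < 1 + s := by linarith
            rw [hWdef]
            simp only
            rw [← ENNReal.ofReal_mul (show (0:ℝ) ≤ (1/(1+s))^2/2 by positivity),
              ← ENNReal.ofReal_mul hs0.le]
            apply ENNReal.ofReal_le_ofReal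
            have key : (1+s)^2 ≤ 4 * s^2 := by nlinarith
            have hEq : s * ((1/(1+s))^2/2 * (2*π)) = s*π/(1+s)^2 := by
              field_simp
            rw [show π/4 * (1/s) = π/(4*s) by ring, hEq,
              div_le_div_iff₀ (by positivity) (by positivity)]
            nlinarith [mul_le_mul_of_nonneg_left key pi_pos.le]
          _ ≤ ∫⁻ s in Ioo 0 R, ENNReal.ofReal s * W s := by
            refine lintegral_mono' (Measure.restrict_mono (fun x hx => ?_) le_rfl) le_rfl
            exact ⟨lt_trans one_pos hx.1, hx.2⟩
    calc ENNReal.ofReal (π/4 * Real.log R) *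
          (ENNReal.ofReal (2*π) * (‖f ((0:ℂ), (0:ℂ))‖₊ : ENNReal)^2)
        ≤ (∫⁻ s in Ioo 0 R, ENNReal.ofReal s * W s) *
          (ENNReal.ofReal (2*π) * (‖f ((0:ℂ), (0:ℂ))‖₊ : ENNReal)^2) := by gcongr
      _ ≤ ∫⁻ z in ball (0:ℂ) R, W (‖z‖) * (‖g z‖₊ : ENNReal)^2 := hdb
      _ ≤ ∫⁻ z, W (‖z‖) * (‖g z‖₊ : ENNReal)^2 := setLIntegral_le_lintegral _ _
      _ ≤ K := stepA
  -- conclusion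
  by_contra hne
  have hc0 : ((‖f ((0:ℂ), (0:ℂ))‖₊ : ENNReal))^2 ≠ 0 := by
    simp only [ne_eq, pow_eq_zero_iff, ENNReal.coe_eq_zero, nnnorm_eq_zero]
    exact fun h => hne (by simpa using h)
  set b : ENNReal := ENNReal.ofReal (2*π) * (‖f ((0:ℂ), (0:ℂ))‖₊ : ENNReal)^2 with hb
  have hb0 : b ≠ 0 :=
    mul_ne_zero (ne_of_gt (ENNReal.ofReal_pos.mpr Real.two_pi_pos)) hc0
  have hbtop : b ≠ ⊤ :=
    ENNReal.mul_ne_top ENNReal.ofReal_ne_top (ENNReal.pow_ne_top ENNReal.coe_ne_top)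
  have hle : ∀ M : ℝ, 0 < M → ENNReal.ofReal (π/4 * M) ≤ K / b := by
    intro M hM
    have hR : 1 < Real.exp M := by
      have := Real.add_one_le_exp M
      linarith
    have := stepB (Real.exp M) hR
    rw [Real.log_exp] at this
    exact (ENNReal.le_div_iff_mul_le (Or.inl hb0) (Or.inl hbtop)).mpr this
  have hfin : K / b < ⊤ := ENNReal.div_lt_top hKfin hb0
  set C : ℝ := (K / b).toReal with hC
  have hC0 : 0 ≤ C := ENNReal.toReal_nonneg
  have hfinal := hle (4*(C+1)/π) (by positivity)
  rw [show π/4 * (4*(C+1)/π) = C + 1 by field_simp] at hfinal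
  rw [← ENNReal.ofReal_toReal hfin.ne, ← hC] at hfinal
  have := (ENNReal.ofReal_le_ofReal_iff hC0).mp hfinal
  linarith
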